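/- Let T, ν, ε, v > 0 and define f(ξ) := (ν²/v²)ξ⁴ − (4(T+1)/v²)ξ² + 4ε²ξ⁴/(ε²v²ξ² + v³) for ξ ∈ ℝ, and g(η) := ε²ν²η² + (ν²v − 4ε²T)η − 4(T+1)v with unique positive root η₀. Then (i) for every ξ ≠ 0, f(ξ) = ξ² g(ξ²)/(ε²v²ξ² + v³), so f(ξ) and g(ξ²) have the same sign; and (ii) for every real ξ with ξ² > η₀, one has 0 < f(ξ) < ((ν/v)ξ² − 2T/(νv))², and hence 0 < √(f(ξ)) < (ν/v)ξ² − 2T/(νv). -/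

import Mathlib

set_option maxHeartbeats 1000000

/-- **Sign and bounds for the discriminant `f` of the dispersion relation.**
For `T, ν, ε, v > 0`, with `f(ξ) := (ν²/v²)ξ⁴ - (4(T+1)/v²)ξ² + 4ε²ξ⁴/(ε²v²ξ² + v³)`
and `g(η) := ε²ν²η² + (ν²v - 4ε²T)η - 4(T+1)v` with unique positive root `η₀`:
(i) for `ξ ≠ 0`, `f(ξ) = ξ² g(ξ²)/(ε²v²ξ² + v³)`, so `f(ξ)` and `g(ξ²)` have the
same sign; (ii) for `ξ² > η₀`, `0 < f(ξ) < ((ν/v)ξ² - 2T/(νv))²`, hence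
`0 < √(f(ξ)) < (ν/v)ξ² - 2T/(νv)`. -/
theorem stmt3 (T ν ε v : ℝ) (hT : 0 < T) (hν : 0 < ν) (hε : 0 < ε) (hv : 0 < v)
    (f g : ℝ → ℝ)
    (hf : ∀ ξ : ℝ, f ξ = (ν ^ 2 / v ^ 2) * ξ ^ 4 - (4 * (T + 1) / v ^ 2) * ξ ^ 2
      + 4 * ε ^ 2 * ξ ^ 4 / (ε ^ 2 * v ^ 2 * ξ ^ 2 + v ^ 3))
    (hg : ∀ η : ℝ, g η = ε ^ 2 * ν ^ 2 * η ^ 2 + (ν ^ 2 * v - 4 * ε ^ 2 * T) * η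
      - 4 * (T + 1) * v)
    (η₀ : ℝ) (hη₀pos : 0 < η₀) (hη₀root : g η₀ = 0)
    (hη₀uniq : ∀ η : ℝ, 0 < η → g η = 0 → η = η₀) :
    (∀ ξ : ℝ, ξ ≠ 0 →
      f ξ = ξ ^ 2 * g (ξ ^ 2) / (ε ^ 2 * v ^ 2 * ξ ^ 2 + v ^ 3) ∧
      (0 < f ξ ↔ 0 < g (ξ ^ 2)) ∧ (f ξ = 0 ↔ g (ξ ^ 2) = 0) ∧ (f ξ < 0 ↔ g (ξ ^ 2) < 0)) ∧
    (∀ ξ : ℝ, η₀ < ξ ^ 2 →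
      0 < f ξ ∧ f ξ < ((ν / v) * ξ ^ 2 - 2 * T / (ν * v)) ^ 2 ∧
      0 < Real.sqrt (f ξ) ∧ Real.sqrt (f ξ) < (ν / v) * ξ ^ 2 - 2 * T / (ν * v)) := by
  have hgη₀ : ε ^ 2 * ν ^ 2 * η₀ ^ 2 + (ν ^ 2 * v - 4 * ε ^ 2 * T) * η₀
      - 4 * (T + 1) * v = 0 := by rw [← hg]; exact hη₀root
  have hD : ∀ ξ : ℝ, 0 < ε ^ 2 * v ^ 2 * ξ ^ 2 + v ^ 3 := fun ξ => by positivity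
  have key : ∀ ξ : ℝ, ξ ≠ 0 →
      f ξ = ξ ^ 2 * g (ξ ^ 2) / (ε ^ 2 * v ^ 2 * ξ ^ 2 + v ^ 3) := by
    intro ξ hξ
    rw [hf, hg]
    have hD' := (hD ξ).ne'
    field_simp
    ring
  have part1 : ∀ ξ : ℝ, ξ ≠ 0 →
      f ξ = ξ ^ 2 * g (ξ ^ 2) / (ε ^ 2 * v ^ 2 * ξ ^ 2 + v ^ 3) ∧
      (0 < f ξ ↔ 0 < g (ξ ^ 2)) ∧ (f ξ = 0 ↔ g (ξ ^ 2) = 0) ∧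
      (f ξ < 0 ↔ g (ξ ^ 2) < 0) := by
    intro ξ hξ
    have hk := key ξ hξ
    have hx2 : 0 < ξ ^ 2 := by positivity
    have hc : 0 < ξ ^ 2 / (ε ^ 2 * v ^ 2 * ξ ^ 2 + v ^ 3) := div_pos hx2 (hD ξ)
    have hk' : f ξ = (ξ ^ 2 / (ε ^ 2 * v ^ 2 * ξ ^ 2 + v ^ 3)) * g (ξ ^ 2) := by
      rw [hk]; ring
    refine ⟨hk, ?_, ?_, ?_⟩
    · rw [hk']; exact mul_pos_iff_of_pos_left hc
    · rw [hk']; constructor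
      · intro h; rcases mul_eq_zero.1 h with h | h
        · exact absurd h hc.ne'
        · exact h
      · intro h; rw [h, mul_zero]
    · rw [hk']
      constructor
      · intro h; nlinarith
      · intro h; exact mul_neg_of_pos_of_neg hc h
  refine ⟨part1, ?_⟩
  intro ξ hξ
  have hx2 : 0 < ξ ^ 2 := lt_trans hη₀pos hξ
  have hξ0 : ξ ≠ 0 := by intro h; rw [h] at hx2; simp at hx2
  have hD' := hD ξ
  have hv2 : (0:ℝ) < v ^ 2 := by positivity
  have hν2 : (0:ℝ) < ν ^ 2 := by positivity
  -- g(ξ²) > 0 beyond the root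
  have hab : 0 < ε ^ 2 * ν ^ 2 * η₀ + (ν ^ 2 * v - 4 * ε ^ 2 * T) := by
    have h4 : (ε ^ 2 * ν ^ 2 * η₀ + (ν ^ 2 * v - 4 * ε ^ 2 * T)) * η₀
        = 4 * (T + 1) * v := by linear_combination hgη₀
    nlinarith [mul_pos (mul_pos (by linarith : (0:ℝ) < 4 * (T+1)) hv) hη₀pos]
  have hgpos : 0 < g (ξ ^ 2) := by
    have hfac : g (ξ ^ 2) = (ξ ^ 2 - η₀) *
        (ε ^ 2 * ν ^ 2 * (ξ ^ 2 + η₀) + (ν ^ 2 * v - 4 * ε ^ 2 * T)) := by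
      rw [hg]; linear_combination hgη₀
    rw [hfac]
    apply mul_pos (by linarith)
    nlinarith [mul_pos (mul_pos (pow_pos hε 2) (pow_pos hν 2)) hx2]
  have hfpos : 0 < f ξ := ((part1 ξ hξ0).2.1).2 hgpos
  -- polynomial form of f
  have hP : f ξ * ((ε ^ 2 * v ^ 2 * ξ ^ 2 + v ^ 3) * v ^ 2)
      = ν ^ 2 * ξ ^ 4 * (ε ^ 2 * v ^ 2 * ξ ^ 2 + v ^ 3)
        - 4 * (T + 1) * ξ ^ 2 * (ε ^ 2 * v ^ 2 * ξ ^ 2 + v ^ 3)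
        + 4 * ε ^ 2 * ξ ^ 4 * v ^ 2 := by
    rw [hf]
    field_simp
  have hqc : 4 * ε ^ 2 * ξ ^ 4 * v ^ 2 < 4 * ξ ^ 2 * (ε ^ 2 * v ^ 2 * ξ ^ 2 + v ^ 3) := by
    nlinarith [mul_pos hx2 (pow_pos hv 3)]
  -- ν²ξ² > 4T
  have hnu : 4 * T < ν ^ 2 * ξ ^ 2 := by
    nlinarith [hP, hqc, mul_pos hfpos (mul_pos hD' hv2), mul_pos hx2 hD']
  have hArep : (ν / v) * ξ ^ 2 - 2 * T / (ν * v) = (ν ^ 2 * ξ ^ 2 - 2 * T) / (ν * v) := by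
    field_simp
  have hA : 0 < (ν / v) * ξ ^ 2 - 2 * T / (ν * v) := by
    rw [hArep]
    exact div_pos (by nlinarith) (by positivity)
  have hbound : f ξ < ((ν / v) * ξ ^ 2 - 2 * T / (ν * v)) ^ 2 := by
    rw [hArep, div_pow, lt_div_iff₀ (by positivity : (0:ℝ) < (ν * v) ^ 2)]
    rw [← mul_lt_mul_iff_of_pos_right hD']
    have hL : f ξ * (ν * v) ^ 2 * (ε ^ 2 * v ^ 2 * ξ ^ 2 + v ^ 3)
        = ν ^ 2 * (ν ^ 2 * ξ ^ 4 * (ε ^ 2 * v ^ 2 * ξ ^ 2 + v ^ 3)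
          - 4 * (T + 1) * ξ ^ 2 * (ε ^ 2 * v ^ 2 * ξ ^ 2 + v ^ 3)
          + 4 * ε ^ 2 * ξ ^ 4 * v ^ 2) := by linear_combination (ν ^ 2) * hP
    linarith [hL, mul_lt_mul_of_pos_left hqc hν2, mul_pos (mul_pos hT hT) hD']
  exact ⟨hfpos, hbound, Real.sqrt_pos.2 hfpos, (Real.sqrt_lt' hA).2 hbound⟩
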